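/- Let μ and (μ_n) be admissible Borel probability measures on the space Γ of lines of the plane. If μ_n converges weakly to μ, then for every compact set K ⊆ ℝ², the pseudo-distances d_{μ_n} converge to d_μ uniformly on K × K; that is, sup over x, y ∈ K of |d_{μ_n}(x,y) − d_μ(x,y)| tends to 0 as n → ∞. -/
import Mathlib


noncomputable section

open MeasureTheory Real

instance : MeasurableSpace Real.Angle :=
  inferInstanceAs (MeasurableSpace (AddCircle (2 * π)))

/-- The space `Γ = (ℝ/2πℤ) × ℝ` parameterizing the lines of the Euclidean plane. -/
abbrev LineSpace : Type := Real.Angle × ℝ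

/-- The line `ℓ(θ, p) = {z : z₁ sin θ − z₂ cos θ = p}` corresponding to `(θ, p) ∈ Γ`. -/
def lineOf (γ : LineSpace) : Set (ℝ × ℝ) :=
  {z : ℝ × ℝ | z.1 * γ.1.sin - z.2 * γ.1.cos = γ.2}

/-- `Γ_A`: the set of (parameters of) lines meeting a given subset `A` of the plane. -/
def linesMeeting (A : Set (ℝ × ℝ)) : Set LineSpace :=
  {γ : LineSpace | (lineOf γ ∩ A).Nonempty}

/-- A Borel measure `μ` on the space of lines is *admissible* if it is invariant under
the involution `(θ, p) ↦ (θ + π, −p)` reversing orientations, is finite on compact sets,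
and gives measure zero to the set of lines through any given point of the plane. -/
def Admissible (μ : Measure LineSpace) : Prop :=
  μ.map (fun γ : LineSpace => (γ.1 + ((π : ℝ) : Real.Angle), -γ.2)) = μ ∧
    (∀ K : Set LineSpace, IsCompact K → μ K < ⊤) ∧
    (∀ z : ℝ × ℝ, μ (linesMeeting {z}) = 0)

/-- The pseudo-distance `d_μ(x, y) = (1/4)·μ(Γ_{[x,y]})` induced by a measure `μ` on the
space of lines. -/
def lineDist (μ : Measure LineSpace) (x y : ℝ × ℝ) : ℝ :=
  (μ (linesMeeting (segment ℝ x y))).toReal / 4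

/-- The area `area_μ(A) = (1/(8π))·(μ ⊗ μ)({pairs of distinct lines meeting inside A})`
induced by a measure `μ` on the space of lines (the Santaló+Blaschke area). -/
def lineArea (μ : Measure LineSpace) (A : Set (ℝ × ℝ)) : ℝ :=
  ((μ.prod μ) {γ : LineSpace × LineSpace |
      lineOf γ.1 ≠ lineOf γ.2 ∧ (lineOf γ.1 ∩ lineOf γ.2 ∩ A).Nonempty}).toReal / (8 * π)

/-- Weak convergence of a sequence of measures: convergence of the integrals of all
bounded continuous functions. -/
def WeakTendsto (μs : ℕ → Measure LineSpace) (μ : Measure LineSpace) : Prop :=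
  ∀ f : BoundedContinuousFunction LineSpace ℝ,
    Filter.Tendsto (fun n => ∫ γ, f γ ∂(μs n)) Filter.atTop (nhds (∫ γ, f γ ∂μ))

/-! ### Auxiliary material -/

instance : BorelSpace Real.Angle :=
  inferInstanceAs (BorelSpace (AddCircle (2 * π)))

instance : SecondCountableTopology Real.Angle :=
  inferInstanceAs (SecondCountableTopology (AddCircle (2 * π)))

namespace Lemma113

open Filter Set Metric

/-- The signed affine function whose zero set is the line `γ`. -/
def lineVal (γ : LineSpace) (z : ℝ × ℝ) : ℝ :=
  z.1 * γ.1.sin - z.2 * γ.1.cos - γ.2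

lemma mem_lineOf {γ : LineSpace} {z : ℝ × ℝ} : z ∈ lineOf γ ↔ lineVal γ z = 0 := by
  simp [lineOf, lineVal, sub_eq_zero]

lemma continuous_lineVal (z : ℝ × ℝ) : Continuous fun γ : LineSpace => lineVal γ z := by
  unfold lineVal
  exact ((continuous_const.mul (Real.Angle.continuous_sin.comp continuous_fst)).sub
    (continuous_const.mul (Real.Angle.continuous_cos.comp continuous_fst))).sub
    continuous_snd

lemma linesMeeting_singleton (z : ℝ × ℝ) :
    linesMeeting {z} = {γ : LineSpace | lineVal γ z = 0} := by
  ext γ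
  simp [linesMeeting, Set.inter_singleton_nonempty, mem_lineOf]

lemma abs_sin_le_one (θ : Real.Angle) : |θ.sin| ≤ 1 := by
  have h := θ.cos_sq_add_sin_sq
  rw [abs_le]
  constructor <;> nlinarith [sq_nonneg θ.cos]

lemma abs_cos_le_one (θ : Real.Angle) : |θ.cos| ≤ 1 := by
  have h := θ.cos_sq_add_sin_sq
  rw [abs_le]
  constructor <;> nlinarith [sq_nonneg θ.sin]

lemma lineVal_combo (γ : LineSpace) (x y : ℝ × ℝ) (t : ℝ) :
    lineVal γ ((1 - t) • x + t • y) = (1 - t) * lineVal γ x + t * lineVal γ y := by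
  simp only [lineVal, Prod.fst_add, Prod.snd_add, Prod.smul_fst, Prod.smul_snd, smul_eq_mul]
  ring

/-- A line meets the segment `[x,y]` iff `lineVal` takes opposite (or zero) signs at the
endpoints. -/
lemma mem_linesMeeting_segment {γ : LineSpace} {x y : ℝ × ℝ} :
    γ ∈ linesMeeting (segment ℝ x y) ↔ lineVal γ x * lineVal γ y ≤ 0 := by
  constructor
  · rintro ⟨z, hzl, hzs⟩
    rw [segment_eq_image] at hzs
    obtain ⟨t, ⟨ht0, ht1⟩, rfl⟩ := hzs
    rw [mem_lineOf, lineVal_combo] at hzl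
    by_contra hc
    push_neg at hc
    rcases mul_pos_iff.mp hc with ⟨hA, hB⟩ | ⟨hA, hB⟩
    · have h1 : 0 ≤ t * lineVal γ y := mul_nonneg ht0 hB.le
      have h2 : 0 ≤ (1 - t) * lineVal γ x := mul_nonneg (by linarith) hA.le
      have h3 : t * lineVal γ y = 0 := by linarith
      have h4 : t = 0 := by
        rcases mul_eq_zero.mp h3 with h | h
        · exact h
        · exact absurd h hB.ne'
      rw [h4] at hzl
      have : lineVal γ x = 0 := by linarith
      exact hA.ne' this
    · have h1 : t * lineVal γ y ≤ 0 := mul_nonpos_of_nonneg_of_nonpos ht0 hB.le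
      have h2 : (1 - t) * lineVal γ x ≤ 0 :=
        mul_nonpos_of_nonneg_of_nonpos (by linarith) hA.le
      have h3 : t * lineVal γ y = 0 := by linarith
      have h4 : t = 0 := by
        rcases mul_eq_zero.mp h3 with h | h
        · exact h
        · exact absurd h hB.ne
      rw [h4] at hzl
      have : lineVal γ x = 0 := by linarith
      exact hA.ne this
  · intro h
    by_cases hA0 : lineVal γ x = 0
    · exact ⟨x, mem_lineOf.mpr hA0, left_mem_segment ℝ x y⟩
    by_cases hB0 : lineVal γ y = 0
    · exact ⟨y, mem_lineOf.mpr hB0, right_mem_segment ℝ x y⟩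
    have hABlt : lineVal γ x * lineVal γ y < 0 := lt_of_le_of_ne h (mul_ne_zero hA0 hB0)
    have key : ∀ t : ℝ, 0 ≤ t → t ≤ 1 →
        (1 - t) * lineVal γ x + t * lineVal γ y = 0 →
        γ ∈ linesMeeting (segment ℝ x y) := by
      intro t ht0 ht1 hval
      refine ⟨(1 - t) • x + t • y, ?_, ?_⟩
      · rw [mem_lineOf, lineVal_combo]
        exact hval
      · rw [segment_eq_image]
        exact ⟨t, ⟨ht0, ht1⟩, rfl⟩
    have hne : lineVal γ x - lineVal γ y ≠ 0 := by
      intro h0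
      have hxy : lineVal γ x = lineVal γ y := by linarith
      rw [hxy] at hABlt
      nlinarith [sq_nonneg (lineVal γ y)]
    have hval : (1 - lineVal γ x / (lineVal γ x - lineVal γ y)) * lineVal γ x
        + (lineVal γ x / (lineVal γ x - lineVal γ y)) * lineVal γ y = 0 := by
      field_simp
      ring
    rcases mul_neg_iff.mp hABlt with ⟨hA, hB⟩ | ⟨hA, hB⟩
    · -- lineVal γ x > 0, lineVal γ y < 0
      have hden : 0 < lineVal γ x - lineVal γ y := by linarith
      exact key _ (div_nonneg hA.le hden.le) (by rw [div_le_one hden]; linarith) hval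
    · -- lineVal γ x < 0, lineVal γ y > 0
      have hden : 0 < lineVal γ y - lineVal γ x := by linarith
      have heq : lineVal γ x / (lineVal γ x - lineVal γ y)
          = (-lineVal γ x) / (lineVal γ y - lineVal γ x) := by
        rw [div_eq_div_iff hne hden.ne']
        ring
      refine key _ ?_ ?_ hval
      · rw [heq]
        exact div_nonneg (by linarith) hden.le
      · rw [heq, div_le_one hden]; linarith

/-- Lines meeting `[x,y]` but avoiding `[x',y']` must meet `[x,x']` or `[y,y']`. -/
lemma linesMeeting_segment_subset (x y x' y' : ℝ × ℝ) :
    linesMeeting (segment ℝ x y) ⊆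
      linesMeeting (segment ℝ x' y') ∪ linesMeeting (segment ℝ x x')
        ∪ linesMeeting (segment ℝ y y') := by
  intro γ hγ
  rw [mem_linesMeeting_segment] at hγ
  simp only [Set.mem_union, mem_linesMeeting_segment]
  by_contra hc
  push_neg at hc
  obtain ⟨⟨h1, h2⟩, h3⟩ := hc
  nlinarith [mul_pos h2 h3, mul_pos h1 h2, mul_pos h1 h3]

/-- The strip of lines passing within (affine) distance `r` of `x`. -/
def strip (x : ℝ × ℝ) (r : ℝ) : Set LineSpace := {γ : LineSpace | |lineVal γ x| ≤ r}

lemma isClosed_strip (x : ℝ × ℝ) (r : ℝ) : IsClosed (strip x r) :=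
  isClosed_le ((continuous_lineVal x).abs) continuous_const

lemma measurableSet_strip (x : ℝ × ℝ) (r : ℝ) : MeasurableSet (strip x r) :=
  (isClosed_strip x r).measurableSet

lemma abs_lineVal_sub (γ : LineSpace) (x y : ℝ × ℝ) :
    |lineVal γ x - lineVal γ y| ≤ 2 * dist x y := by
  have hfst : dist x.1 y.1 ≤ dist x y := by
    rw [Prod.dist_eq]; exact le_max_left _ _
  have hsnd : dist x.2 y.2 ≤ dist x y := by
    rw [Prod.dist_eq]; exact le_max_right _ _
  have h1 : |(x.1 - y.1) * γ.1.sin| ≤ dist x y := by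
    calc |(x.1 - y.1) * γ.1.sin| = |x.1 - y.1| * |γ.1.sin| := abs_mul _ _
      _ ≤ |x.1 - y.1| * 1 := mul_le_mul_of_nonneg_left (abs_sin_le_one _) (abs_nonneg _)
      _ = dist x.1 y.1 := by rw [mul_one, Real.dist_eq]
      _ ≤ dist x y := hfst
  have h2 : |(x.2 - y.2) * γ.1.cos| ≤ dist x y := by
    calc |(x.2 - y.2) * γ.1.cos| = |x.2 - y.2| * |γ.1.cos| := abs_mul _ _
      _ ≤ |x.2 - y.2| * 1 := mul_le_mul_of_nonneg_left (abs_cos_le_one _) (abs_nonneg _)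
      _ = dist x.2 y.2 := by rw [mul_one, Real.dist_eq]
      _ ≤ dist x y := hsnd
  have heq : lineVal γ x - lineVal γ y = (x.1 - y.1) * γ.1.sin - (x.2 - y.2) * γ.1.cos := by
    simp only [lineVal]; ring
  rw [heq]
  calc |(x.1 - y.1) * γ.1.sin - (x.2 - y.2) * γ.1.cos|
      ≤ |(x.1 - y.1) * γ.1.sin| + |(x.2 - y.2) * γ.1.cos| := abs_sub _ _
    _ ≤ dist x y + dist x y := add_le_add h1 h2
    _ = 2 * dist x y := by ring

/-- If `x` is within `δ` of `c`, then every line meeting `[x, c]` lies in the strip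
of width `2δ` around `c`. -/
lemma linesMeeting_segment_subset_strip {x c : ℝ × ℝ} {δ : ℝ} (hd : dist x c ≤ δ) :
    linesMeeting (segment ℝ x c) ⊆ strip c (2 * δ) := by
  intro γ hγ
  rw [mem_linesMeeting_segment] at hγ
  have hdist := abs_lineVal_sub γ x c
  set A := lineVal γ x
  set B := lineVal γ c
  have h2 : |A - B| ≤ 2 * δ := by
    have : (2 : ℝ) * dist x c ≤ 2 * δ := by linarith
    linarith [hdist]
  show |B| ≤ 2 * δ
  rw [abs_le] at h2 ⊢
  rcases le_or_gt B 0 with hB | hB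
  · constructor
    · nlinarith [abs_nonneg (A - B), abs_le.mp (le_refl |A - B|)]
    · nlinarith [dist_nonneg (x := x) (y := c)]
  · have hA : A ≤ 0 := by nlinarith
    constructor
    · nlinarith [dist_nonneg (x := x) (y := c)]
    · linarith [h2.2]

lemma iInter_strip (x : ℝ × ℝ) :
    ⋂ k : ℕ, strip x ((k + 1 : ℝ)⁻¹) = linesMeeting {x} := by
  rw [linesMeeting_singleton]
  ext γ
  simp only [Set.mem_iInter, strip, Set.mem_setOf_eq]
  constructor
  · intro h
    by_contra hne
    have habs : 0 < |lineVal γ x| := abs_pos.mpr hne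
    obtain ⟨k, hk⟩ := exists_nat_one_div_lt habs
    have := h k
    rw [one_div] at hk
    linarith
  · intro h k
    rw [h, abs_zero]
    positivity

lemma isClosed_linesMeeting_segment (x y : ℝ × ℝ) :
    IsClosed (linesMeeting (segment ℝ x y)) := by
  have : linesMeeting (segment ℝ x y)
      = {γ : LineSpace | lineVal γ x * lineVal γ y ≤ 0} := by
    ext γ; exact mem_linesMeeting_segment
  rw [this]
  exact isClosed_le (((continuous_lineVal x).mul (continuous_lineVal y))) continuous_const

lemma frontier_subset (x y : ℝ × ℝ) :
    frontier (linesMeeting (segment ℝ x y)) ⊆ linesMeeting {x} ∪ linesMeeting {y} := by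
  have hCeq : linesMeeting (segment ℝ x y)
      = {γ : LineSpace | lineVal γ x * lineVal γ y ≤ 0} := by
    ext γ; exact mem_linesMeeting_segment
  have hU : IsOpen {γ : LineSpace | lineVal γ x * lineVal γ y < 0} :=
    isOpen_lt ((continuous_lineVal x).mul (continuous_lineVal y)) continuous_const
  intro γ hγ
  have h1 : γ ∈ linesMeeting (segment ℝ x y) :=
    (isClosed_linesMeeting_segment x y).closure_subset
      (frontier_subset_closure hγ)
  have h2 : γ ∉ interior (linesMeeting (segment ℝ x y)) := hγ.2
  have h3 : γ ∉ {γ : LineSpace | lineVal γ x * lineVal γ y < 0} := by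
    intro hmem
    refine h2 (interior_maximal ?_ hU hmem)
    rw [hCeq]
    exact fun a ha => Set.mem_setOf.mpr (le_of_lt (Set.mem_setOf.mp ha))
  have h4 : lineVal γ x * lineVal γ y = 0 := by
    rw [hCeq] at h1
    exact le_antisymm h1 (not_lt.mp h3)
  rcases mul_eq_zero.mp h4 with h | h
  · left; rw [linesMeeting_singleton]; exact h
  · right; rw [linesMeeting_singleton]; exact h

lemma lineDist_nonneg (ν : Measure LineSpace) (x y : ℝ × ℝ) : 0 ≤ lineDist ν x y := by
  unfold lineDist; positivity

lemma lineDist_le_of_subset {ν : Measure LineSpace} [IsFiniteMeasure ν] {x y : ℝ × ℝ}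
    {S : Set LineSpace} (hsub : linesMeeting (segment ℝ x y) ⊆ S) {c : ℝ} (hc : 0 ≤ c)
    (hS : ν S ≤ ENNReal.ofReal c) : lineDist ν x y ≤ c / 4 := by
  unfold lineDist
  have h1 : ν (linesMeeting (segment ℝ x y)) ≤ ENNReal.ofReal c :=
    le_trans (measure_mono hsub) hS
  have h2 : (ν (linesMeeting (segment ℝ x y))).toReal ≤ c := by
    calc (ν (linesMeeting (segment ℝ x y))).toReal
        ≤ (ENNReal.ofReal c).toReal := ENNReal.toReal_mono ENNReal.ofReal_ne_top h1
      _ ≤ c := by rw [ENNReal.toReal_ofReal hc]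
  linarith

lemma lineDist_tri (ν : Measure LineSpace) [IsFiniteMeasure ν] (x y x' y' : ℝ × ℝ) :
    lineDist ν x y ≤ lineDist ν x' y' + lineDist ν x x' + lineDist ν y y' := by
  have hsub := linesMeeting_segment_subset x y x' y'
  have hmeas : ν (linesMeeting (segment ℝ x y))
      ≤ ν (linesMeeting (segment ℝ x' y')) + ν (linesMeeting (segment ℝ x x'))
        + ν (linesMeeting (segment ℝ y y')) := by
    calc ν (linesMeeting (segment ℝ x y))
        ≤ ν ((linesMeeting (segment ℝ x' y') ∪ linesMeeting (segment ℝ x x'))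
            ∪ linesMeeting (segment ℝ y y')) := measure_mono hsub
      _ ≤ ν (linesMeeting (segment ℝ x' y') ∪ linesMeeting (segment ℝ x x'))
            + ν (linesMeeting (segment ℝ y y')) := measure_union_le _ _
      _ ≤ ν (linesMeeting (segment ℝ x' y')) + ν (linesMeeting (segment ℝ x x'))
            + ν (linesMeeting (segment ℝ y y')) := by
          gcongr
          exact measure_union_le _ _
  have htr : (ν (linesMeeting (segment ℝ x y))).toReal
      ≤ (ν (linesMeeting (segment ℝ x' y'))).toReal
        + (ν (linesMeeting (segment ℝ x x'))).toReal
        + (ν (linesMeeting (segment ℝ y y'))).toReal := by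
    have hne : ν (linesMeeting (segment ℝ x' y')) + ν (linesMeeting (segment ℝ x x'))
        + ν (linesMeeting (segment ℝ y y')) ≠ ⊤ := by finiteness
    calc (ν (linesMeeting (segment ℝ x y))).toReal
        ≤ (ν (linesMeeting (segment ℝ x' y')) + ν (linesMeeting (segment ℝ x x'))
            + ν (linesMeeting (segment ℝ y y'))).toReal := ENNReal.toReal_mono hne hmeas
      _ = _ := by
          rw [ENNReal.toReal_add (by finiteness) (by finiteness),
            ENNReal.toReal_add (by finiteness) (by finiteness)]
  unfold lineDist
  linarith
lemma lineDist_comm (ν : Measure LineSpace) (x y : ℝ × ℝ) :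
    lineDist ν x y = lineDist ν y x := by
  unfold lineDist
  rw [segment_symm]

lemma abs_lineDist_sub_le (ν : Measure LineSpace) [IsFiniteMeasure ν] (x y x' y' : ℝ × ℝ) :
    |lineDist ν x y - lineDist ν x' y'| ≤ lineDist ν x x' + lineDist ν y y' := by
  rw [abs_sub_le_iff]
  constructor
  · linarith [lineDist_tri ν x y x' y']
  · have h := lineDist_tri ν x' y' x y
    rw [lineDist_comm ν x' x, lineDist_comm ν y' y] at h
    linarith

end Lemma113

open Lemma113 Filter Metric in
/-- **Lemma 11.3 of the paper**: if admissible Borel probability measures `μ n` on the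
space of lines of the plane converge weakly to an admissible Borel probability measure
`μ`, then the induced pseudo-distances `d_{μ n}` converge to `d_μ` uniformly on `K × K`,
for every compact set `K ⊆ ℝ²`. -/
theorem lineDist_tendstoUniformly
    (μ : Measure LineSpace) (μs : ℕ → Measure LineSpace)
    [IsProbabilityMeasure μ] [∀ n, IsProbabilityMeasure (μs n)]
    (hμ : Admissible μ) (hμs : ∀ n, Admissible (μs n))
    (hconv : WeakTendsto μs μ)
    (K : Set (ℝ × ℝ)) (hK : IsCompact K) :
    ∀ ε : ℝ, 0 < ε → ∃ N : ℕ, ∀ n ≥ N, ∀ x ∈ K, ∀ y ∈ K,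
      |lineDist (μs n) x y - lineDist μ x y| ≤ ε := by
  intro ε hε
  -- probability measure versions
  set P : ProbabilityMeasure LineSpace := ⟨μ, inferInstance⟩ with hP
  set Ps : ℕ → ProbabilityMeasure LineSpace := fun n => ⟨μs n, inferInstance⟩ with hPs
  have htend : Tendsto Ps atTop (nhds P) :=
    ProbabilityMeasure.tendsto_iff_forall_integral_tendsto.mpr (fun f => hconv f)
  -- small strips around every point
  have hsmall : ∀ x : ℝ × ℝ, ∃ δ : ℝ, 0 < δ ∧ μ (strip x (2 * δ)) < ENNReal.ofReal (ε / 2) := by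
    intro x
    have hto : Tendsto (fun k : ℕ => μ (strip x ((k + 1 : ℝ)⁻¹))) atTop
        (nhds (μ (⋂ k : ℕ, strip x ((k + 1 : ℝ)⁻¹)))) := by
      apply tendsto_measure_iInter_atTop
      · exact fun k => (measurableSet_strip x _).nullMeasurableSet
      · intro k l hkl γ hγ
        simp only [strip, Set.mem_setOf_eq] at hγ ⊢
        refine le_trans hγ ?_
        have : (k + 1 : ℝ) ≤ (l + 1 : ℝ) := by exact_mod_cast Nat.succ_le_succ hkl
        exact inv_anti₀ (by positivity) this
      · exact ⟨0, (measure_lt_top μ _).ne⟩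
    rw [iInter_strip, hμ.2.2 x] at hto
    have hεpos : (0 : ENNReal) < ENNReal.ofReal (ε / 2) := by
      simp [ENNReal.ofReal_pos]; linarith
    obtain ⟨k, hk⟩ := (hto.eventually_lt_const hεpos).exists
    exact ⟨(k + 1 : ℝ)⁻¹ / 2, by positivity, by
      have : 2 * ((k + 1 : ℝ)⁻¹ / 2) = (k + 1 : ℝ)⁻¹ := by ring
      rw [this]; exact hk⟩
  choose δ hδpos hδ using hsmall
  -- finite subcover
  obtain ⟨t, htK, hcov⟩ := hK.elim_nhds_subcover (fun x => ball x (δ x))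
    (fun x _ => ball_mem_nhds x (hδpos x))
  -- eventually, μs n of all strips is small
  have E1 : ∀ᶠ n in atTop, ∀ i ∈ t, μs n (strip i (2 * δ i)) < ENNReal.ofReal (ε / 2) := by
    rw [Filter.eventually_all_finset]
    intro i _
    have hlim : (atTop.limsup fun n => (Ps n : Measure LineSpace) (strip i (2 * δ i)))
        ≤ (P : Measure LineSpace) (strip i (2 * δ i)) :=
      ProbabilityMeasure.limsup_measure_closed_le_of_tendsto htend (isClosed_strip _ _)
    have hlt : (atTop.limsup fun n => (Ps n : Measure LineSpace) (strip i (2 * δ i)))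
        < ENNReal.ofReal (ε / 2) := lt_of_le_of_lt hlim (hδ i)
    exact Filter.eventually_lt_of_limsup_lt hlt
  -- eventually, lineDist between net points converges
  have E2 : ∀ᶠ n in atTop, ∀ i ∈ t, ∀ j ∈ t,
      |lineDist (μs n) i j - lineDist μ i j| ≤ ε / 2 := by
    rw [Filter.eventually_all_finset]
    intro i _
    rw [Filter.eventually_all_finset]
    intro j _
    have hnull : (P : Measure LineSpace) (frontier (linesMeeting (segment ℝ i j))) = 0 := by
      refine measure_mono_null (frontier_subset i j) ?_
      exact measure_union_null (hμ.2.2 i) (hμ.2.2 j)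
    have htendij := ProbabilityMeasure.tendsto_measure_of_null_frontier_of_tendsto' htend hnull
    have htendr : Tendsto (fun n => lineDist (μs n) i j) atTop (nhds (lineDist μ i j)) := by
      unfold lineDist
      exact (((ENNReal.tendsto_toReal
        (measure_ne_top μ _)).comp htendij).div_const 4)
    have := htendr (Metric.ball_mem_nhds (lineDist μ i j) (by linarith : (0:ℝ) < ε / 2))
    filter_upwards [this] with n hn
    rw [Set.mem_preimage, Metric.mem_ball, Real.dist_eq] at hn
    exact le_of_lt hn
  obtain ⟨N, hN⟩ := Filter.eventually_atTop.mp (E1.and E2)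
  refine ⟨N, fun n hn x hx y hy => ?_⟩
  obtain ⟨hN1, hN2⟩ := hN n hn
  -- locate x, y in the cover
  have hx' := hcov hx
  have hy' := hcov hy
  simp only [Set.mem_iUnion, exists_prop] at hx' hy'
  obtain ⟨i, hit, hxi⟩ := hx'
  obtain ⟨j, hjt, hyj⟩ := hy'
  have hxid : dist x i ≤ δ i := le_of_lt (mem_ball.mp hxi)
  have hyjd : dist y j ≤ δ j := le_of_lt (mem_ball.mp hyj)
  have hsubx := linesMeeting_segment_subset_strip hxid
  have hsuby := linesMeeting_segment_subset_strip hyjd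
  -- corner bounds
  have hxi_n : lineDist (μs n) x i ≤ (ε / 2) / 4 :=
    lineDist_le_of_subset hsubx (by linarith) (le_of_lt (hN1 i hit))
  have hyj_n : lineDist (μs n) y j ≤ (ε / 2) / 4 :=
    lineDist_le_of_subset hsuby (by linarith) (le_of_lt (hN1 j hjt))
  have hxi_m : lineDist μ x i ≤ (ε / 2) / 4 :=
    lineDist_le_of_subset hsubx (by linarith) (le_of_lt (hδ i))
  have hyj_m : lineDist μ y j ≤ (ε / 2) / 4 :=
    lineDist_le_of_subset hsuby (by linarith) (le_of_lt (hδ j))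
  have tri_n := abs_lineDist_sub_le (μs n) x y i j
  have tri_m := abs_lineDist_sub_le μ x y i j
  have hmid := hN2 i hit j hjt
  calc |lineDist (μs n) x y - lineDist μ x y|
      ≤ |lineDist (μs n) x y - lineDist (μs n) i j|
        + |lineDist (μs n) i j - lineDist μ i j|
        + |lineDist μ i j - lineDist μ x y| := by
        have hstep : |lineDist (μs n) x y - lineDist μ x y|
            ≤ |lineDist (μs n) x y - lineDist (μs n) i j|
              + |lineDist (μs n) i j - lineDist μ x y| :=
          abs_sub_le _ _ _
        have hstep2 : |lineDist (μs n) i j - lineDist μ x y|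
            ≤ |lineDist (μs n) i j - lineDist μ i j|
              + |lineDist μ i j - lineDist μ x y| :=
          abs_sub_le _ _ _
        linarith
    _ ≤ (lineDist (μs n) x i + lineDist (μs n) y j) + ε / 2
        + (lineDist μ x i + lineDist μ y j) := by
        have h3 : |lineDist μ i j - lineDist μ x y|
            = |lineDist μ x y - lineDist μ i j| := abs_sub_comm _ _
        rw [h3]
        exact add_le_add (add_le_add tri_n hmid) tri_m
    _ ≤ (ε / 8 + ε / 8) + ε / 2 + (ε / 8 + ε / 8) := by
        have h8 : (ε / 2) / 4 = ε / 8 := by ring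
        rw [h8] at hxi_n hyj_n hxi_m hyj_m
        gcongr
    _ = ε := by ring
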